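/- Let B > 0. Then the set of points z = x + iy with 0 ≤ x ≤ π, y > 0, Re(cos z) = cosh B, and Im(cos z) ≤ 0 equals the curve { arccos(cosh B / cosh t) + i·t : t ≥ B }. In other words, the component in the half-strip {z : Re z ∈ [0,π], Im z > 0} of the preimage under cos of the ray {w : Re w = cosh B, Im w ≤ 0} admits the parametrization γ_B = { arccos(cosh B / cosh t) + i·t : t ≥ B }. -/
import Mathlib


open Set

lemma cos_re_im_aux (x y : ℝ) :
    Complex.cos ((x : ℂ) + (y : ℂ) * Complex.I) =
      ((Real.cos x * Real.cosh y : ℝ) : ℂ) -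
        ((Real.sin x * Real.sinh y : ℝ) : ℂ) * Complex.I := by
  rw [Complex.cos_add, Complex.cos_mul_I, Complex.sin_mul_I]
  push_cast [← Complex.ofReal_cosh, ← Complex.ofReal_sinh]
  ring

lemma cos_re_aux (x y : ℝ) :
    (Complex.cos ((x : ℂ) + (y : ℂ) * Complex.I)).re = Real.cos x * Real.cosh y := by
  rw [cos_re_im_aux]; simp [Complex.cos_ofReal_re]

lemma cos_im_aux (x y : ℝ) :
    (Complex.cos ((x : ℂ) + (y : ℂ) * Complex.I)).im = -(Real.sin x * Real.sinh y) := by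
  rw [cos_re_im_aux]; simp [Complex.cos_ofReal_re, Complex.sin_ofReal_re, Complex.sinh_ofReal_re]

/-- Parametrization of the curve `γ_B`: the part of the preimage of the ray
`{w : Re w = cosh B, Im w ≤ 0}` under `cos` lying in the half-strip
`{z : Re z ∈ [0,π], Im z > 0}` is `{arccos(cosh B / cosh t) + i t : t ≥ B}`. -/
theorem gammaB_parametrization (B : ℝ) (hB : 0 < B) :
    {z : ℂ | 0 ≤ z.re ∧ z.re ≤ Real.pi ∧ 0 < z.im ∧
        (Complex.cos z).re = Real.cosh B ∧ (Complex.cos z).im ≤ 0} =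
      (fun t : ℝ => (Real.arccos (Real.cosh B / Real.cosh t) : ℂ) + (t : ℂ) * Complex.I)
        '' Ici B := by
  ext z
  simp only [mem_setOf_eq, mem_image, mem_Ici]
  constructor
  · rintro ⟨h0, hπ, hy, hRe, _⟩
    have hz : z = (z.re : ℂ) + (z.im : ℂ) * Complex.I := (Complex.re_add_im z).symm
    rw [hz, cos_re_aux] at hRe
    have hcoshpos : 0 < Real.cosh z.im := Real.cosh_pos _
    have hcoshB : Real.cosh B ≤ Real.cosh z.im := by
      calc Real.cosh B = Real.cos z.re * Real.cosh z.im := hRe.symm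
        _ ≤ 1 * Real.cosh z.im := by
            exact mul_le_mul_of_nonneg_right (Real.cos_le_one _) hcoshpos.le
        _ = Real.cosh z.im := one_mul _
    refine ⟨z.im, ?_, ?_⟩
    · have := Real.cosh_le_cosh.mp hcoshB
      rwa [abs_of_pos hB, abs_of_pos hy] at this
    · apply Complex.ext <;> simp
      rw [← hRe, mul_div_assoc, div_self hcoshpos.ne', mul_one,
        Real.arccos_cos h0 hπ]
  · rintro ⟨t, ht, rfl⟩
    have htpos : 0 < t := hB.trans_le ht
    have hcosht : 0 < Real.cosh t := Real.cosh_pos _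
    have hle1 : Real.cosh B / Real.cosh t ≤ 1 := by
      rw [div_le_one hcosht]
      exact Real.cosh_le_cosh.mpr (by rw [abs_of_pos hB, abs_of_pos htpos]; exact ht)
    have hpos : 0 < Real.cosh B / Real.cosh t :=
      div_pos (Real.cosh_pos B) hcosht
    have hx0 : 0 ≤ Real.arccos (Real.cosh B / Real.cosh t) := Real.arccos_nonneg _
    have hxπ : Real.arccos (Real.cosh B / Real.cosh t) ≤ Real.pi := Real.arccos_le_pi _
    refine ⟨?_, ?_, ?_, ?_, ?_⟩
    · simpa using hx0
    · simpa using hxπ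
    · simpa using htpos
    · rw [cos_re_aux, Real.cos_arccos (by linarith) hle1, div_mul_cancel₀ _ hcosht.ne']
    · rw [cos_im_aux]
      have hs : 0 ≤ Real.sin (Real.arccos (Real.cosh B / Real.cosh t)) :=
        Real.sin_nonneg_of_nonneg_of_le_pi hx0 hxπ
      have : 0 ≤ Real.sinh t := (Real.sinh_pos_iff.mpr htpos).le
      nlinarith
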